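/- Let T = node(T_a, T_b) be a full binary tree with n leaves, where the maximal pending subtrees have n_a and n_b leaves. If n_a ≠ n_b and both n_a and n_b are odd, then C(T) > c(n); in other words, T does not have minimal Colless index. -/
import Mathlib


/-- Full binary trees: either a single leaf, or a node with two full binary subtrees. -/
inductive FBT : Type
  | leaf : FBT
  | node : FBT → FBT → FBT

namespace FBT

/-- Number of leaves of a full binary tree. -/
def leaves : FBT → ℕ
  | leaf => 1
  | node a b => leaves a + leaves b

/-- The Colless index: the sum over internal nodes of the absolute difference of the
numbers of leaves of the two maximal pending subtrees. -/
def colless : FBT → ℕ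
  | leaf => 0
  | node a b => colless a + colless b + Nat.dist (leaves a) (leaves b)

end FBT

/-- The minimal Colless index over all full binary trees with `n` leaves. -/
noncomputable def minColless (n : ℕ) : ℕ :=
  sInf {m : ℕ | ∃ T : FBT, T.leaves = n ∧ T.colless = m}


def g : ℕ → ℕ
  | 0 => 0
  | 1 => 0
  | n+2 => g ((n+2)/2) + g ((n+3)/2) + (n+2) % 2
termination_by n => n
decreasing_by all_goals omega

lemma g_rec (n : ℕ) (hn : 2 ≤ n) : g n = g (n/2) + g ((n+1)/2) + n % 2 := by
  obtain ⟨k, rfl⟩ : ∃ k, n = k + 2 := ⟨n - 2, by omega⟩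
  rw [g]

lemma g_one : g 1 = 0 := by rw [g]

lemma g_even (m : ℕ) (hm : 1 ≤ m) : g (2*m) = g m + g m := by
  rw [g_rec (2*m) (by omega), show 2*m/2 = m by omega, show (2*m+1)/2 = m by omega]
  omega

lemma g_odd (m : ℕ) (hm : 1 ≤ m) : g (2*m+1) = g m + g (m+1) + 1 := by
  rw [g_rec (2*m+1) (by omega), show (2*m+1)/2 = m by omega,
    show (2*m+1+1)/2 = m+1 by omega]
  omega

lemma g_le (n : ℕ) : ∀ m, m ≤ n → 1 ≤ m → g m + 1 ≤ m := by
  induction n using Nat.strong_induction_on with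
  | _ n IH =>
    intro m hmn hm
    match m, hm with
    | 1, _ => simp [g_one]
    | 2, _ => simp [show g 2 = 0 by rw [show (2:ℕ) = 2*1 by norm_num, g_even 1 le_rfl]; simp [g_one]]
    | (m+3), _ =>
      rcases Nat.even_or_odd (m+3) with he | ho
      · obtain ⟨k, hk⟩ := he
        have hk' : m + 3 = 2 * k := by omega
        have h1 : g k + 1 ≤ k := IH (n-1) (by omega) k (by omega) (by omega)
        rw [hk', g_even k (by omega)]
        omega
      · obtain ⟨k, hk⟩ := ho
        have h1 : g k + 1 ≤ k := IH (n-1) (by omega) k (by omega) (by omega)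
        have h2 : g (k+1) + 1 ≤ k+1 := IH (n-1) (by omega) (k+1) (by omega) (by omega)
        rw [hk, g_odd k (by omega)]
        omega

lemma g_le' (m : ℕ) (hm : 1 ≤ m) : g m + 1 ≤ m := g_le m m le_rfl hm

lemma g_two : g 2 = 0 := by
  rw [show (2:ℕ) = 2*1 by norm_num, g_even 1 le_rfl]; simp [g_one]

/-- `g (b+1) ≤ g b + (b-1)` for `b ≥ 1`. -/
lemma g_succ_le (b : ℕ) (hb : 1 ≤ b) : g (b+1) ≤ g b + (b - 1) := by
  match b, hb with
  | 1, _ => simp [g_one, g_two]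
  | (b+2), _ =>
    rcases Nat.even_or_odd (b+2) with he | ho
    · obtain ⟨j, hj⟩ := he
      have hj' : b + 2 = 2*j := by omega
      have h1 : g (j+1) + 1 ≤ j + 1 := g_le' (j+1) (by omega)
      rcases Nat.lt_or_ge j 2 with h | h
      · -- j = 1, b+2 = 2
        have : j = 1 := by omega
        subst this
        simp only [hj', ]
        rw [show 2*1+1 = 2*1+1 by rfl]
        rw [g_odd 1 le_rfl, g_even 1 le_rfl]
        simp [g_one, g_two]
      · rw [hj', g_odd j (by omega), g_even j (by omega)]
        omega
    · obtain ⟨j, hj⟩ := ho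
      have hj1 : 1 ≤ j := by omega
      have h1 : g (j+1) + 1 ≤ j + 1 := g_le' (j+1) (by omega)
      rw [hj, show 2*j+1+1 = 2*(j+1) by ring, g_even (j+1) (by omega), g_odd j hj1]
      omega

/-- Subadditivity with distance: `g (a+b) ≤ g a + g b + dist a b`. -/
lemma g_add_le : ∀ n a b, a + b ≤ n → 1 ≤ a → 1 ≤ b →
    g (a+b) ≤ g a + g b + Nat.dist a b := by
  intro n
  induction n using Nat.strong_induction_on with
  | _ n IH =>
    intro a b hn ha hb
    rcases eq_or_lt_of_le ha with h1 | ha2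
    · -- a = 1
      rw [← h1]
      have := g_succ_le b hb
      have hd : Nat.dist 1 b = b - 1 := by simp only [Nat.dist]; omega
      rw [show 1 + b = b + 1 by ring, hd, g_one]
      omega
    rcases eq_or_lt_of_le hb with h1 | hb2
    · -- b = 1
      rw [← h1]
      have := g_succ_le a ha
      have hd : Nat.dist a 1 = a - 1 := by simp only [Nat.dist]; omega
      rw [hd, g_one]
      omega
    -- a, b ≥ 2
    rcases Nat.even_or_odd a with hea | hoa <;> rcases Nat.even_or_odd b with heb | hob
    · obtain ⟨i, hi⟩ := hea; obtain ⟨j, hj⟩ := heb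
      have hi' : a = 2*i := by omega
      have hj' : b = 2*j := by omega
      have hIH := IH (n-1) (by omega) i j (by omega) (by omega) (by omega)
      rw [hi', hj', show 2*i + 2*j = 2*(i+j) by ring,
        g_even (i+j) (by omega), g_even i (by omega), g_even j (by omega)]
      have : Nat.dist (2*i) (2*j) = 2 * Nat.dist i j := by simp only [Nat.dist]; omega
      rw [this]; omega
    · obtain ⟨i, hi⟩ := hea; obtain ⟨j, hj⟩ := hob
      have hi' : a = 2*i := by omega
      have hIH1 := IH (n-1) (by omega) i j (by omega) (by omega) (by omega)
      have hIH2 := IH (n-1) (by omega) i (j+1) (by omega) (by omega) (by omega)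
      rw [hi', hj, show 2*i + (2*j+1) = 2*(i+j)+1 by ring,
        g_odd (i+j) (by omega), g_even i (by omega), g_odd j (by omega),
        show i + j + 1 = i + (j+1) by ring]
      have : Nat.dist i j + Nat.dist i (j+1) ≤ Nat.dist (2*i) (2*j+1) := by
        simp only [Nat.dist]; omega
      omega
    · obtain ⟨i, hi⟩ := hoa; obtain ⟨j, hj⟩ := heb
      have hj' : b = 2*j := by omega
      have hIH1 := IH (n-1) (by omega) i j (by omega) (by omega) (by omega)
      have hIH2 := IH (n-1) (by omega) (i+1) j (by omega) (by omega) (by omega)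
      rw [hi, hj', show 2*i+1 + 2*j = 2*(i+j)+1 by ring,
        g_odd (i+j) (by omega), g_odd i (by omega), g_even j (by omega),
        show i + j + 1 = i + 1 + j by ring]
      have : Nat.dist i j + Nat.dist (i+1) j ≤ Nat.dist (2*i+1) (2*j) := by
        simp only [Nat.dist]; omega
      omega
    · obtain ⟨i, hi⟩ := hoa; obtain ⟨j, hj⟩ := hob
      have hIH1 := IH (n-1) (by omega) i (j+1) (by omega) (by omega) (by omega)
      have hIH2 := IH (n-1) (by omega) (i+1) j (by omega) (by omega) (by omega)
      rw [hi, hj, show 2*i+1 + (2*j+1) = 2*(i+j+1) by ring,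
        g_even (i+j+1) (by omega), g_odd i (by omega), g_odd j (by omega)]
      have key : Nat.dist i (j+1) + Nat.dist (i+1) j ≤ Nat.dist (2*i+1) (2*j+1) + 2 := by
        simp only [Nat.dist]; omega
      rw [show i + (j+1) = i + j + 1 by ring] at hIH1
      rw [show i + 1 + j = i + j + 1 by ring] at hIH2
      omega

lemma FBT.leaves_pos : ∀ T : FBT, 1 ≤ T.leaves
  | .leaf => le_rfl
  | .node a b => by
      have := leaves_pos a
      simp [FBT.leaves]; omega

/-- Every tree's Colless index is at least `g` of its number of leaves. -/
lemma g_le_colless : ∀ T : FBT, g T.leaves ≤ T.colless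
  | .leaf => by simp [FBT.leaves, FBT.colless, g_one]
  | .node a b => by
      have h1 := g_le_colless a
      have h2 := g_le_colless b
      have h3 := g_add_le (a.leaves + b.leaves) a.leaves b.leaves le_rfl
        a.leaves_pos b.leaves_pos
      simp only [FBT.leaves, FBT.colless]
      omega

/-- There is a tree with `n` leaves and Colless index `g n`. -/
lemma exists_g : ∀ n, 1 ≤ n → ∃ T : FBT, T.leaves = n ∧ T.colless = g n := by
  intro n
  induction n using Nat.strong_induction_on with
  | _ n IH =>
    intro hn
    rcases eq_or_lt_of_le hn with h1 | h2
    · exact ⟨FBT.leaf, by simp [FBT.leaves, ← h1], by simp [FBT.colless, ← h1, g_one]⟩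
    · obtain ⟨T1, hL1, hC1⟩ := IH (n/2) (by omega) (by omega)
      obtain ⟨T2, hL2, hC2⟩ := IH ((n+1)/2) (by omega) (by omega)
      refine ⟨FBT.node T1 T2, by simp [FBT.leaves, hL1, hL2]; omega, ?_⟩
      simp only [FBT.colless, hL1, hL2, hC1, hC2]
      rw [g_rec n (by omega)]
      have : Nat.dist (n/2) ((n+1)/2) = n % 2 := by simp only [Nat.dist]; omega
      omega

lemma minColless_eq (n : ℕ) (hn : 1 ≤ n) : minColless n = g n := by
  have hne : {m : ℕ | ∃ T : FBT, T.leaves = n ∧ T.colless = m}.Nonempty := by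
    obtain ⟨T, h1, h2⟩ := exists_g n hn
    exact ⟨T.colless, T, h1, rfl⟩
  unfold minColless
  apply le_antisymm
  · exact Nat.sInf_le (by obtain ⟨T, h1, h2⟩ := exists_g n hn; exact ⟨T, h1, h2⟩)
  · obtain ⟨T, hT1, hT2⟩ := Nat.sInf_mem hne
    rw [← hT2, ← hT1]
    exact g_le_colless T

/-- Key strict arithmetic inequality for two distinct odd parts. -/
lemma g_odd_odd_strict (p q : ℕ) (hp : Odd p) (hq : Odd q) (hne : p ≠ q) :
    g (p + q) < g p + g q + Nat.dist p q := by
  obtain ⟨s, rfl⟩ := hp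
  obtain ⟨t, rfl⟩ := hq
  rcases Nat.eq_zero_or_pos s with hs | hs
  · -- p = 1
    have ht : 1 ≤ t := by omega
    have h1 : g (t+1) + 1 ≤ t + 1 := g_le' (t+1) (by omega)
    have e : 2*s+1 = 1 := by omega
    rw [e, show 1 + (2*t+1) = 2*(t+1) by ring, g_even (t+1) (by omega),
      g_odd t ht, g_one]
    have : Nat.dist 1 (2*t+1) = 2*t := by simp only [Nat.dist]; omega
    omega
  rcases Nat.eq_zero_or_pos t with ht | ht
  · -- q = 1
    have h1 : g (s+1) + 1 ≤ s + 1 := g_le' (s+1) (by omega)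
    have e : 2*t+1 = 1 := by omega
    rw [e, show 2*s+1 + 1 = 2*(s+1) by ring, g_even (s+1) (by omega),
      g_odd s hs, g_one]
    have : Nat.dist (2*s+1) 1 = 2*s := by simp only [Nat.dist]; omega
    omega
  · -- s, t ≥ 1
    have hst : s ≠ t := by omega
    have hIH1 := g_add_le (s + (t+1)) s (t+1) le_rfl (by omega) (by omega)
    have hIH2 := g_add_le (s+1+t) (s+1) t le_rfl (by omega) (by omega)
    rw [show 2*s+1 + (2*t+1) = 2*(s+t+1) by ring, g_even (s+t+1) (by omega),
      g_odd s hs, g_odd t ht]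
    rw [show s + (t+1) = s + t + 1 by ring] at hIH1
    rw [show s + 1 + t = s + t + 1 by ring] at hIH2
    have key : Nat.dist s (t+1) + Nat.dist (s+1) t + 2 ≤ Nat.dist (2*s+1) (2*t+1) + 2 := by
      simp only [Nat.dist]; omega
    have key2 : Nat.dist s (t+1) + Nat.dist (s+1) t < Nat.dist (2*s+1) (2*t+1) + 2 := by
      simp only [Nat.dist]; omega
    omega

theorem odd_odd_partition_not_minimal (a b : FBT)
    (hne : a.leaves ≠ b.leaves) (ha : Odd a.leaves) (hb : Odd b.leaves) :
    (FBT.node a b).colless > minColless (a.leaves + b.leaves) := by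
  have h1 := g_le_colless a
  have h2 := g_le_colless b
  have h3 := g_odd_odd_strict a.leaves b.leaves ha hb hne
  rw [minColless_eq (a.leaves + b.leaves) (by have := a.leaves_pos; omega)]
  simp only [FBT.colless]
  omega
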